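/- arXiv:1906.09331 — 2 statements merged into one kernel-verified Lean document; each statement's English description precedes it below -/
import Mathlib

section
/- Let l be a natural number and set ε_l := 2^{−2^l}. Let q, v ∈ ℝ with v < q + 2·ε_l, and let K be a natural number such that q + k·ε_{l+1} ≤ v for every integer 1 ≤ k ≤ K. Then ∑_{k=1}^{K} (v − q − k·ε_{l+1}) < 2. -/
/-- Regret of the accepted exploration rounds of a phase is less than 2. -/
theorem stmt_7 (l K : ℕ) (q v : ℝ)
    (h1 : v < q + 2 * ((2 : ℝ) ^ (2 ^ l))⁻¹)
    (h2 : ∀ k : ℕ, 1 ≤ k → k ≤ K → q + (k : ℝ) * ((2 : ℝ) ^ (2 ^ (l + 1)))⁻¹ ≤ v) :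
    ∑ k ∈ Finset.Icc 1 K, (v - q - (k : ℝ) * ((2 : ℝ) ^ (2 ^ (l + 1)))⁻¹) < 2 := by
  rcases Nat.eq_zero_or_pos K with hK | hK
  · simp [hK]
  set a : ℝ := ((2 : ℝ) ^ (2 ^ l))⁻¹ with ha
  have ha0 : 0 < a := by positivity
  have hε : ((2 : ℝ) ^ (2 ^ (l + 1)))⁻¹ = a ^ 2 := by
    rw [ha, pow_succ, pow_mul, ← inv_pow]
  have hgauss : ∀ n : ℕ, ∑ k ∈ Finset.Icc 1 n, (k : ℝ) = n * (n + 1) / 2 := by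
    intro n
    induction n with
    | zero => simp
    | succ n ih =>
      rw [Finset.sum_Icc_succ_top (by omega)]
      push_cast
      rw [ih]
      ring
  have hsum : ∑ k ∈ Finset.Icc 1 K, (v - q - (k : ℝ) * ((2 : ℝ) ^ (2 ^ (l + 1)))⁻¹)
      < ∑ k ∈ Finset.Icc 1 K, (2 * a - (k : ℝ) * a ^ 2) := by
    apply Finset.sum_lt_sum_of_nonempty (Finset.nonempty_Icc.mpr hK)
    intro k _
    rw [hε]
    linarith
  have hrhs : ∑ k ∈ Finset.Icc 1 K, (2 * a - (k : ℝ) * a ^ 2)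
      = 2 * a * K - a ^ 2 * (K * (K + 1) / 2) := by
    rw [Finset.sum_sub_distrib, Finset.sum_const, ← Finset.sum_mul, hgauss K]
    simp [Nat.card_Icc]
    ring
  have hK1 : (0 : ℝ) < K := by exact_mod_cast hK
  nlinarith [sq_nonneg (a * K - 2), mul_pos (mul_pos ha0 ha0) hK1, sq_nonneg a]
end

section
/- Let l ≥ 1 and r be natural numbers, set ε_l := 2^{−2^l} and g(l) := 2^{2^l}, let v ∈ [0,1] and q ∈ ℝ, and let K be a natural number such that: v < q + 2·ε_{l−1}; q + k·ε_l ≤ v for every integer 1 ≤ k ≤ K; and v − (q + K·ε_l) < 2·ε_l. Then the phase regret satisfies ∑_{k=1}^{K} (v − q − k·ε_l) + r·v + g(l)·(v − q − K·ε_l) < r·v + 4. -/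
lemma gauss_icc (K : ℕ) : (∑ k ∈ Finset.Icc 1 K, (k : ℝ)) = K * (K + 1) / 2 := by
  induction K with
  | zero => simp
  | succ n ih =>
    rw [Finset.sum_Icc_succ_top (by omega : 1 ≤ n + 1), ih]
    push_cast
    ring

/-- Per-phase regret bound R_l < r·v + 4 from the proof of Lemma 2. -/
theorem stmt_9 (l r : ℕ) (hl : 1 ≤ l) (v q : ℝ) (hv0 : 0 ≤ v) (hv1 : v ≤ 1)
    (K : ℕ)
    (h1 : v < q + 2 * ((2 : ℝ) ^ (2 ^ (l - 1)))⁻¹)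
    (h2 : ∀ k : ℕ, 1 ≤ k → k ≤ K → q + (k : ℝ) * ((2 : ℝ) ^ (2 ^ l))⁻¹ ≤ v)
    (h3 : v - (q + (K : ℝ) * ((2 : ℝ) ^ (2 ^ l))⁻¹) < 2 * ((2 : ℝ) ^ (2 ^ l))⁻¹) :
    (∑ k ∈ Finset.Icc 1 K, (v - q - (k : ℝ) * ((2 : ℝ) ^ (2 ^ l))⁻¹))
      + (r : ℝ) * v
      + (2 : ℝ) ^ (2 ^ l) * (v - q - (K : ℝ) * ((2 : ℝ) ^ (2 ^ l))⁻¹)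
      < (r : ℝ) * v + 4 := by
  set M : ℝ := (2 : ℝ) ^ (2 ^ (l - 1)) with hMdef
  have hMpos : 0 < M := by positivity
  have hM1 : (1 : ℝ) ≤ M := one_le_pow₀ (by norm_num)
  have hG : (2 : ℝ) ^ (2 ^ l) = M ^ 2 := by
    rw [hMdef, ← pow_mul]
    congr 1
    rw [← pow_succ, Nat.sub_add_cancel hl]
  have hGpos : (0 : ℝ) < (2 : ℝ) ^ (2 ^ l) := by positivity
  -- Exploitation term bound: < 2
  have hexp : (2 : ℝ) ^ (2 ^ l) * (v - q - (K : ℝ) * ((2 : ℝ) ^ (2 ^ l))⁻¹) < 2 := by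
    have h3' : v - (q + (K : ℝ) * ((2 : ℝ) ^ (2 ^ l))⁻¹) < 2 * ((2 : ℝ) ^ (2 ^ l))⁻¹ := h3
    have := mul_lt_mul_of_pos_left h3' hGpos
    calc (2 : ℝ) ^ (2 ^ l) * (v - q - (K : ℝ) * ((2 : ℝ) ^ (2 ^ l))⁻¹)
        = (2 : ℝ) ^ (2 ^ l) * (v - (q + (K : ℝ) * ((2 : ℝ) ^ (2 ^ l))⁻¹)) := by ring
      _ < (2 : ℝ) ^ (2 ^ l) * (2 * ((2 : ℝ) ^ (2 ^ l))⁻¹) := this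
      _ = 2 := by field_simp
  -- Sum bound: ≤ 2
  have hsum : (∑ k ∈ Finset.Icc 1 K, (v - q - (k : ℝ) * ((2 : ℝ) ^ (2 ^ l))⁻¹)) ≤ 2 := by
    have hterm : ∀ k ∈ Finset.Icc 1 K,
        v - q - (k : ℝ) * ((2 : ℝ) ^ (2 ^ l))⁻¹ ≤ 2 * M⁻¹ - (k : ℝ) * ((2 : ℝ) ^ (2 ^ l))⁻¹ := by
      intro k _
      have : v - q < 2 * M⁻¹ := by linarith [h1]
      linarith
    calc (∑ k ∈ Finset.Icc 1 K, (v - q - (k : ℝ) * ((2 : ℝ) ^ (2 ^ l))⁻¹))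
        ≤ ∑ k ∈ Finset.Icc 1 K, (2 * M⁻¹ - (k : ℝ) * ((2 : ℝ) ^ (2 ^ l))⁻¹) :=
          Finset.sum_le_sum hterm
      _ = (K : ℝ) * (2 * M⁻¹) - ((2 : ℝ) ^ (2 ^ l))⁻¹ * (K * (K + 1) / 2) := by
          rw [Finset.sum_sub_distrib, Finset.sum_const, ← Finset.sum_mul, gauss_icc]
          simp [Nat.card_Icc]
          ring
      _ ≤ 2 := by
          rw [hG]
          have hM2 : (0 : ℝ) < M ^ 2 := by positivity
          have hKnn : (0 : ℝ) ≤ (K : ℝ) := Nat.cast_nonneg K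
          have hrw : (K : ℝ) * (2 * M⁻¹) - (M ^ 2)⁻¹ * (K * (K + 1) / 2)
              = (2 * K * M - K * (K + 1) / 2) / M ^ 2 := by
            field_simp
          rw [hrw, div_le_iff₀ hM2]
          nlinarith [sq_nonneg (2 * M - (K : ℝ))]
  linarith
end
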